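/- Let σ > 0 and σ_θ > 0. For each n ≥ 1, let D_n > 0 be a solution of the equation n = (1/2) · log₂[ (σ_θ²/D_n) · ( D_n n / (D_n n − σ² + D_n σ²/σ_θ²) )ⁿ ] with D_n n − σ² + D_n σ²/σ_θ² > 0. Then D_n = 4σ²/(3n + 4σ²/σ_θ²) + o(n⁻¹); in particular lim_{n→∞} n · D_n = 4σ²/3. -/

import Mathlib

open Real Filter Asymptotics Topology

private lemma aux_div_rpow_inv (a : ℝ) (ha : 0 < a) :
    Tendsto (fun n : ℕ => (a / n) ^ ((n : ℝ)⁻¹)) atTop (𝓝 1) := by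
  have h1 : Tendsto (fun n : ℕ => Real.log a * (n : ℝ)⁻¹) atTop (𝓝 0) := by
    simpa using
      ((tendsto_inv_atTop_zero).comp (tendsto_natCast_atTop_atTop (R := ℝ))).const_mul
        (Real.log a)
  have h2 : Tendsto (fun n : ℕ => Real.log n * (n : ℝ)⁻¹) atTop (𝓝 0) := by
    have h := (Real.isLittleO_log_id_atTop.tendsto_div_nhds_zero).comp
      (tendsto_natCast_atTop_atTop (R := ℝ))
    refine h.congr' (Eventually.of_forall fun n => ?_)
    simp [div_eq_mul_inv]
  have hlog : Tendsto (fun n : ℕ => (Real.log a - Real.log n) * (n : ℝ)⁻¹) atTop (𝓝 0) := by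
    simpa [sub_mul] using h1.sub h2
  have hexp := (Real.continuous_exp.tendsto 0).comp hlog
  rw [Real.exp_zero] at hexp
  refine hexp.congr' ?_
  filter_upwards [eventually_ge_atTop 1] with n hn
  have hn0 : (0:ℝ) < n := by exact_mod_cast hn
  rw [Function.comp_apply, Real.rpow_def_of_pos (div_pos ha hn0),
    Real.log_div (ne_of_gt ha) (ne_of_gt hn0)]

set_option maxHeartbeats 1600000 in
/-- Asymptotics of the minimal distortion in the quadratic Gaussian CEO problem with `n`
agents and sum-rate `n`: if `D n > 0` solves
`n = (1/2) log₂ [ (σ_θ²/Dₙ) (Dₙ n / (Dₙ n − σ² + Dₙ σ²/σ_θ²))ⁿ ]`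
(with positive denominator), then `D n = 4σ²/(3n + 4σ²/σ_θ²) + o(n⁻¹)`; in particular
`n · D n → 4σ²/3`. -/
theorem ceo_distortion_asymptotics (σ σθ : ℝ) (hσ : 0 < σ) (hσθ : 0 < σθ)
    (D : ℕ → ℝ)
    (hD_pos : ∀ n : ℕ, 1 ≤ n → 0 < D n)
    (hD_den : ∀ n : ℕ, 1 ≤ n → 0 < D n * n - σ ^ 2 + D n * σ ^ 2 / σθ ^ 2)
    (hD_eq : ∀ n : ℕ, 1 ≤ n →
      (n : ℝ) = (1 / 2) * Real.logb 2
        ((σθ ^ 2 / D n) *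
          (D n * n / (D n * n - σ ^ 2 + D n * σ ^ 2 / σθ ^ 2)) ^ n)) :
    (fun n : ℕ => D n - 4 * σ ^ 2 / (3 * n + 4 * σ ^ 2 / σθ ^ 2)) =o[atTop]
        (fun n : ℕ => (n : ℝ)⁻¹) ∧
      Tendsto (fun n : ℕ => (n : ℝ) * D n) atTop (nhds (4 * σ ^ 2 / 3)) := by
  have hσ2 : (0:ℝ) < σ ^ 2 := pow_pos hσ 2
  have hσθ2 : (0:ℝ) < σθ ^ 2 := pow_pos hσθ 2
  set k : ℝ := σ ^ 2 / σθ ^ 2 with hk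
  have hk0 : 0 < k := div_pos hσ2 hσθ2
  have hkσ : σθ ^ 2 * k = σ ^ 2 := by rw [hk]; field_simp
  set r : ℕ → ℝ := fun n => D n * n / (D n * n - σ ^ 2 + D n * k) with hrdef
  have hden_eq : ∀ n, D n * n - σ ^ 2 + D n * σ ^ 2 / σθ ^ 2
      = D n * n - σ ^ 2 + D n * k := by
    intro n; rw [hk]; ring
  have hden : ∀ n : ℕ, 1 ≤ n → 0 < D n * n - σ ^ 2 + D n * k := by
    intro n hn; rw [← hden_eq]; exact hD_den n hn
  -- key algebraic identity
  have hkey : ∀ n : ℕ, 1 ≤ n → r n ^ n = 4 ^ n * (D n / σθ ^ 2) := by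
    intro n hn
    have hDn := hD_pos n hn
    have hdn := hden n hn
    have hcpos : 0 < D n * n :=
      mul_pos hDn (by exact_mod_cast Nat.lt_of_lt_of_le Nat.zero_lt_one hn)
    have hrpos : 0 < r n := div_pos hcpos hdn
    have hEpos : 0 < (σθ ^ 2 / D n) *
        (D n * n / (D n * n - σ ^ 2 + D n * σ ^ 2 / σθ ^ 2)) ^ n := by
      rw [hden_eq]
      exact mul_pos (div_pos hσθ2 hDn) (pow_pos hrpos n)
    have hlogb : Real.logb 2
        ((σθ ^ 2 / D n) *
          (D n * n / (D n * n - σ ^ 2 + D n * σ ^ 2 / σθ ^ 2)) ^ n) = 2 * n := by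
      have := hD_eq n hn
      linarith
    have hE : (σθ ^ 2 / D n) *
        (D n * n / (D n * n - σ ^ 2 + D n * σ ^ 2 / σθ ^ 2)) ^ n = 4 ^ n := by
      have h2 := Real.rpow_logb (by norm_num : (0:ℝ) < 2) (by norm_num : (2:ℝ) ≠ 1) hEpos
      rw [hlogb] at h2
      rw [← h2]
      rw [show (2 : ℝ) * n = ((2 * n : ℕ) : ℝ) by push_cast; ring, Real.rpow_natCast]
      rw [pow_mul]
      norm_num
    rw [hden_eq] at hE
    rw [show D n * (n:ℝ) / (D n * n - σ ^ 2 + D n * k) = r n from rfl] at hE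
    field_simp at hE ⊢
    linarith [hE]
  -- D n < σθ²
  have hDlt : ∀ n : ℕ, 1 ≤ n → D n < σθ ^ 2 := by
    intro n hn
    by_contra h
    push_neg at h
    have hDn := hD_pos n hn
    have hdn := hden n hn
    have hcpos : 0 < D n * n :=
      mul_pos hDn (by exact_mod_cast Nat.lt_of_lt_of_le Nat.zero_lt_one hn)
    have hDk : σ ^ 2 ≤ D n * k := by
      calc σ ^ 2 = σθ ^ 2 * k := hkσ.symm
      _ ≤ D n * k := by nlinarith
    have hr1 : r n ≤ 1 := by
      rw [hrdef]
      exact div_le_one_of_le₀ (by linarith) hdn.le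
    have hrn1 : r n ^ n ≤ 1 :=
      pow_le_one₀ (le_of_lt (div_pos hcpos hdn)) hr1
    have h4 : (4:ℝ) ^ n * (D n / σθ ^ 2) ≥ 4 := by
      have h1 : (1:ℝ) ≤ D n / σθ ^ 2 := (one_le_div hσθ2).2 h
      have h2 : (4:ℝ) ^ 1 ≤ 4 ^ n := pow_le_pow_right₀ (by norm_num) hn
      nlinarith
    rw [hkey n hn] at hrn1
    linarith
  -- σ² − D n k > 0, 1 < r n < 4, and the master equation
  have hDk : ∀ n : ℕ, 1 ≤ n → D n * k < σ ^ 2 := by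
    intro n hn
    calc D n * k < σθ ^ 2 * k := by nlinarith [hDlt n hn]
    _ = σ ^ 2 := hkσ
  have hr_gt1 : ∀ n : ℕ, 1 ≤ n → 1 < r n := by
    intro n hn
    rw [hrdef]
    exact (one_lt_div (hden n hn)).2 (by nlinarith [hDk n hn])
  have hr_lt4 : ∀ n : ℕ, 1 ≤ n → r n < 4 := by
    intro n hn
    by_contra h
    push_neg at h
    have h4 : (4:ℝ) ^ n ≤ r n ^ n := pow_le_pow_left₀ (by norm_num) h n
    rw [hkey n hn] at h4
    have : D n / σθ ^ 2 < 1 := (div_lt_one hσθ2).2 (hDlt n hn)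
    nlinarith [pow_pos (show (0:ℝ) < 4 by norm_num) n]
  have heq2 : ∀ n : ℕ, 1 ≤ n →
      (D n * n) * (r n - 1) = r n * (σ ^ 2 - D n * k) := by
    intro n hn
    have h := div_mul_cancel₀ (D n * (n:ℝ)) (hden n hn).ne'
    have h' : r n * (D n * n - σ ^ 2 + D n * k) = D n * n := by
      rw [hrdef]; exact h
    linear_combination h'
  -- eventual upper bound on n * D n
  have hsmall : ∀ᶠ n : ℕ in atTop, (n : ℝ) * σθ ^ 2 * (1/2) ^ n ≤ 4 * σ ^ 2 := by
    have h := (tendsto_self_mul_const_pow_of_lt_one (by norm_num : (0:ℝ) ≤ 1/2)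
      (by norm_num : (1/2:ℝ) < 1)).const_mul (σθ ^ 2)
    have h0 : σθ ^ 2 * 0 < 4 * σ ^ 2 := by nlinarith
    filter_upwards [h.eventually_le_const h0] with n hn
    calc (n : ℝ) * σθ ^ 2 * (1/2) ^ n = σθ ^ 2 * ((n:ℝ) * (1/2) ^ n) := by ring
    _ ≤ 4 * σ ^ 2 := hn
  have hub : ∀ᶠ n : ℕ in atTop, D n * n ≤ 4 * σ ^ 2 := by
    filter_upwards [eventually_ge_atTop 1, hsmall] with n hn hsm
    have hDn := hD_pos n hn
    have hn0 : (0:ℝ) < n := by exact_mod_cast hn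
    by_cases hcase : σθ ^ 2 * (1/2) ^ n ≤ D n
    · -- then r n ≥ 2
      have h2n : (2:ℝ) ^ n ≤ r n ^ n := by
        rw [hkey n hn]
        have h1 : (1/2:ℝ) ^ n ≤ D n / σθ ^ 2 := by
          rw [le_div_iff₀ hσθ2]; linarith
        calc (2:ℝ) ^ n = 4 ^ n * (1/2) ^ n := by
              rw [← mul_pow]; norm_num
        _ ≤ 4 ^ n * (D n / σθ ^ 2) :=
              mul_le_mul_of_nonneg_left h1 (pow_nonneg (by norm_num) n)
      have hr2 : 2 ≤ r n := by
        by_contra h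
        push_neg at h
        have := pow_lt_pow_left₀ h (by linarith [hr_gt1 n hn] : (0:ℝ) ≤ r n)
          (show n ≠ 0 by omega)
        linarith
      have h1 : D n * n ≤ D n * n * (r n - 1) := by
        nlinarith [mul_pos hDn hn0]
      have h2 : r n * (σ ^ 2 - D n * k) ≤ 4 * σ ^ 2 := by
        nlinarith [hr_lt4 n hn, hDk n hn]
      linarith [heq2 n hn]
    · push_neg at hcase
      nlinarith [hn0.le]
  -- D n → 0
  have hinvlim : Tendsto (fun n : ℕ => (n : ℝ)⁻¹) atTop (𝓝 0) :=
    tendsto_inv_atTop_zero.comp (tendsto_natCast_atTop_atTop (R := ℝ))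
  have hD0 : Tendsto D atTop (𝓝 0) := by
    have hup : Tendsto (fun n : ℕ => 4 * σ ^ 2 * (n : ℝ)⁻¹) atTop (𝓝 0) := by
      simpa using hinvlim.const_mul (4 * σ ^ 2)
    refine tendsto_of_tendsto_of_tendsto_of_le_of_le' tendsto_const_nhds hup ?_ ?_
    · filter_upwards [eventually_ge_atTop 1] with n hn
      exact (hD_pos n hn).le
    · filter_upwards [eventually_ge_atTop 1, hub] with n hn h
      have hn0 : (0:ℝ) < n := by exact_mod_cast hn
      rw [← le_div_iff₀ hn0] at h
      simpa [div_eq_mul_inv] using h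
  -- eventual lower bound on n * D n
  have hlbev : ∀ᶠ n : ℕ in atTop, σ ^ 2 / 6 ≤ D n * n := by
    have hDk2 : ∀ᶠ n : ℕ in atTop, D n * k ≤ σ ^ 2 / 2 := by
      have h := hD0.mul_const k
      rw [zero_mul] at h
      exact h.eventually_le_const (by positivity)
    filter_upwards [eventually_ge_atTop 1, hDk2] with n hn hk2
    have h := heq2 n hn
    have h1 := hr_gt1 n hn
    have h4 := hr_lt4 n hn
    have hDn := hD_pos n hn
    have hn0 : (0:ℝ) < n := by exact_mod_cast hn
    nlinarith [mul_pos hDn hn0]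
  -- r n → 4 by squeezing
  have hrid : ∀ n : ℕ, 1 ≤ n → r n = 4 * (D n / σθ ^ 2) ^ ((n:ℝ)⁻¹) := by
    intro n hn
    have hn0 : (n:ℝ) ≠ 0 := Nat.cast_ne_zero.2 (by omega)
    have hrpos : (0:ℝ) < r n := lt_trans one_pos (hr_gt1 n hn)
    have h1 : r n = (r n ^ n) ^ ((n:ℝ)⁻¹) := by
      rw [← Real.rpow_natCast (r n) n, ← Real.rpow_mul hrpos.le,
        mul_inv_cancel₀ hn0, Real.rpow_one]
    have h4 : (((4:ℝ) ^ n) : ℝ) ^ ((n:ℝ)⁻¹) = 4 := by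
      rw [← Real.rpow_natCast (4:ℝ) n, ← Real.rpow_mul (by norm_num),
        mul_inv_cancel₀ hn0, Real.rpow_one]
    rw [h1, hkey n hn,
      Real.mul_rpow (pow_nonneg (by norm_num) n) (div_nonneg (hD_pos n hn).le hσθ2.le), h4]
  have hr4 : Tendsto r atTop (𝓝 4) := by
    have hlow : Tendsto (fun n : ℕ => 4 * ((σ ^ 2 / (6 * σθ ^ 2)) / n) ^ ((n:ℝ)⁻¹))
        atTop (𝓝 4) := by
      simpa using (aux_div_rpow_inv (σ ^ 2 / (6 * σθ ^ 2)) (by positivity)).const_mul 4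
    have hhigh : Tendsto (fun n : ℕ => 4 * ((4 * σ ^ 2 / σθ ^ 2) / n) ^ ((n:ℝ)⁻¹))
        atTop (𝓝 4) := by
      simpa using (aux_div_rpow_inv (4 * σ ^ 2 / σθ ^ 2) (by positivity)).const_mul 4
    refine tendsto_of_tendsto_of_tendsto_of_le_of_le' hlow hhigh ?_ ?_
    · filter_upwards [eventually_ge_atTop 1, hlbev] with n hn hlb
      have hn0 : (0:ℝ) < n := by exact_mod_cast hn
      rw [hrid n hn]
      have hle : (σ ^ 2 / (6 * σθ ^ 2)) / n ≤ D n / σθ ^ 2 := by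
        rw [div_le_div_iff₀ (by positivity) hσθ2]
        have : σ ^ 2 / 6 ≤ D n * n := hlb
        calc σ ^ 2 / (6 * σθ ^ 2) * σθ ^ 2 = σ ^ 2 / 6 := by field_simp
        _ ≤ D n * n := hlb
      have := Real.rpow_le_rpow (by positivity) hle (by positivity : (0:ℝ) ≤ (n:ℝ)⁻¹)
      linarith
    · filter_upwards [eventually_ge_atTop 1, hub] with n hn hb
      have hn0 : (0:ℝ) < n := by exact_mod_cast hn
      rw [hrid n hn]
      have hle : D n / σθ ^ 2 ≤ (4 * σ ^ 2 / σθ ^ 2) / n := by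
        rw [div_le_div_iff₀ hσθ2 (by positivity)]
        calc D n * n ≤ 4 * σ ^ 2 := hb
        _ = 4 * σ ^ 2 / σθ ^ 2 * σθ ^ 2 := by field_simp
      have := Real.rpow_le_rpow (div_nonneg (hD_pos n hn).le hσθ2.le) hle
        (by positivity : (0:ℝ) ≤ (n:ℝ)⁻¹)
      linarith
  -- n * D n → 4σ²/3
  have hnum : Tendsto (fun n : ℕ => r n * (σ ^ 2 - D n * k)) atTop (𝓝 (4 * σ ^ 2)) := by
    have h := hr4.mul ((tendsto_const_nhds (x := σ ^ 2)).sub (hD0.mul_const k))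
    simpa using h
  have hden3 : Tendsto (fun n : ℕ => r n - 1) atTop (𝓝 3) := by
    have h := hr4.sub (tendsto_const_nhds (x := (1:ℝ)))
    norm_num at h
    exact h
  have hc : Tendsto (fun n : ℕ => D n * n) atTop (𝓝 (4 * σ ^ 2 / 3)) := by
    have hdiv := hnum.div hden3 (by norm_num : (3:ℝ) ≠ 0)
    refine Tendsto.congr' ?_ hdiv
    filter_upwards [eventually_ge_atTop 1] with n hn
    have h := heq2 n hn
    have h1 := hr_gt1 n hn
    have hne : r n - 1 ≠ 0 := by linarith
    simp only [Pi.div_apply]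
    rw [div_eq_iff hne]
    linarith
  constructor
  · have hne : ∀ᶠ n : ℕ in atTop,
        ((n:ℝ)⁻¹ = 0 → D n - 4 * σ ^ 2 / (3 * n + 4 * σ ^ 2 / σθ ^ 2) = 0) := by
      filter_upwards [eventually_ge_atTop 1] with n hn h
      have hn0 : (0:ℝ) < n := by exact_mod_cast hn
      exact absurd h (by positivity)
    rw [isLittleO_iff_tendsto' hne]
    have hdd : Tendsto (fun n : ℕ => 3 + (4 * σ ^ 2 / σθ ^ 2) * (n:ℝ)⁻¹) atTop (𝓝 3) := by
      have h := hinvlim.const_mul (4 * σ ^ 2 / σθ ^ 2)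
      simpa using (tendsto_const_nhds (x := (3:ℝ))).add h
    have htail : Tendsto (fun n : ℕ => 4 * σ ^ 2 / (3 + (4 * σ ^ 2 / σθ ^ 2) * (n:ℝ)⁻¹))
        atTop (𝓝 (4 * σ ^ 2 / 3)) :=
      (tendsto_const_nhds (x := 4 * σ ^ 2)).div hdd (by norm_num)
    refine Tendsto.congr' ?_ (by simpa using hc.sub htail)
    filter_upwards [eventually_ge_atTop 1] with n hn
    have hn0 : (0:ℝ) < n := by exact_mod_cast hn
    have hd1 : (0:ℝ) < 3 * n + 4 * σ ^ 2 / σθ ^ 2 := by positivity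
    have hd2 : (0:ℝ) < 3 + (4 * σ ^ 2 / σθ ^ 2) * (n:ℝ)⁻¹ := by positivity
    field_simp
  · exact hc.congr fun n => mul_comm _ _
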